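/- Let V be Gaussian with mean zero and variance σ_v² > 0, let α ∈ ℝ and β > 0, and let f_PLT(v) = α(−1)^{⌊v/β + 1/2⌋}(β⌊v/β + 1/2⌋ − v). Then E[f_PLT(V)²] = α² ( σ_v² + β² Σ_{i∈ℤ} i² ( Q((−β/2 + iβ)/σ_v) − Q((β/2 + iβ)/σ_v) ) − (2βσ_v/√(2π)) Σ_{i∈ℤ} i ( e^{−(−β/2+iβ)²/(2σ_v²)} − e^{−(β/2+iβ)²/(2σ_v²)} ) ), where both series converge absolutely. -/

import Mathlib

open MeasureTheory ProbabilityTheory Real Set Filter Topology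
open scoped NNReal ENNReal

noncomputable section

/-- Standard normal complementary CDF `Q(z) = (1/√(2π)) ∫_z^∞ e^{-x²/2} dx`. -/
def gaussQ (z : ℝ) : ℝ := (1 / Real.sqrt (2 * π)) * ∫ x in Set.Ioi z, Real.exp (-x ^ 2 / 2)

/-- The periodic linear transmission (PLT) encoder with slope `α` and period `β`:
`f_PLT(v) = α (-1)^⌊v/β + 1/2⌋ (β ⌊v/β + 1/2⌋ - v)`. -/
def fPLT (α β v : ℝ) : ℝ :=
  α * (-1 : ℝ) ^ ⌊v / β + 1 / 2⌋ * (β * (⌊v / β + 1 / 2⌋ : ℤ) - v)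

/-- Gaussian density with mean 0 and standard deviation σ. -/
def gpdf (σ x : ℝ) : ℝ := (σ * Real.sqrt (2 * π))⁻¹ * Real.exp (-x ^ 2 / (2 * σ ^ 2))

lemma gpdf_nonneg {σ : ℝ} (hσ : 0 < σ) (x : ℝ) : 0 ≤ gpdf σ x := by
  unfold gpdf; positivity

lemma gpdf_eq' (σ x : ℝ) :
    gpdf σ x = (σ * Real.sqrt (2 * π))⁻¹ * Real.exp (-((2 * σ ^ 2)⁻¹) * x ^ 2) := by
  unfold gpdf
  congr 1
  congr 1
  rw [neg_div, div_eq_mul_inv]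
  ring

lemma gpdf_fun_eq (σ : ℝ) :
    gpdf σ = fun x => (σ * Real.sqrt (2 * π))⁻¹ * Real.exp (-((2 * σ ^ 2)⁻¹) * x ^ 2) :=
  funext (gpdf_eq' σ)

lemma integrable_gpdf {σ : ℝ} (hσ : 0 < σ) : Integrable (gpdf σ) := by
  rw [gpdf_fun_eq]
  exact (integrable_exp_neg_mul_sq (by positivity)).const_mul _

lemma integrable_mul_gpdf {σ : ℝ} (hσ : 0 < σ) : Integrable (fun x => x * gpdf σ x) := by
  have h := (integrable_mul_exp_neg_mul_sq (b := (2 * σ ^ 2)⁻¹) (by positivity)).const_mul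
    ((σ * Real.sqrt (2 * π))⁻¹)
  have hfe : (fun x : ℝ => (σ * Real.sqrt (2 * π))⁻¹ *
      (x * Real.exp (-((2 * σ ^ 2)⁻¹) * x ^ 2))) = fun x => x * gpdf σ x := by
    funext x
    rw [gpdf_eq']
    ring
  rwa [hfe] at h

lemma integrable_sq_mul_gpdf {σ : ℝ} (hσ : 0 < σ) : Integrable (fun x => x ^ 2 * gpdf σ x) := by
  have h0 : Integrable (fun x : ℝ => x ^ (2 : ℝ) * Real.exp (-((2 * σ ^ 2)⁻¹) * x ^ 2)) :=
    integrable_rpow_mul_exp_neg_mul_sq (by positivity) (by norm_num)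
  have h := h0.const_mul ((σ * Real.sqrt (2 * π))⁻¹)
  have hfe : (fun x : ℝ => (σ * Real.sqrt (2 * π))⁻¹ *
      (x ^ (2 : ℝ) * Real.exp (-((2 * σ ^ 2)⁻¹) * x ^ 2))) = fun x => x ^ 2 * gpdf σ x := by
    funext x
    rw [gpdf_eq', show x ^ (2 : ℝ) = x ^ (2 : ℕ) by rw [← Real.rpow_natCast x 2]; norm_num]
    ring
  rwa [hfe] at h

lemma integrable_abs_mul_gpdf {σ : ℝ} (hσ : 0 < σ) : Integrable (fun x => |x| * gpdf σ x) := by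
  have h := (integrable_mul_gpdf hσ).abs
  have hfe : (fun x : ℝ => |x * gpdf σ x|) = fun x => |x| * gpdf σ x := by
    funext x
    rw [abs_mul, abs_of_nonneg (gpdf_nonneg hσ x)]
  rwa [hfe] at h

lemma integral_gpdf_Ioi {σ : ℝ} (hσ : 0 < σ) (a : ℝ) :
    ∫ x in Ioi a, gpdf σ x = gaussQ (a / σ) := by
  have hs : (0 : ℝ) < Real.sqrt (2 * π) := Real.sqrt_pos.mpr (by positivity)
  have h1 : ∀ x : ℝ, gpdf σ x = (σ * Real.sqrt (2 * π))⁻¹ *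
      Real.exp (-(σ⁻¹ * x) ^ 2 / 2) := by
    intro x
    unfold gpdf
    have harg : -(σ⁻¹ * x) ^ 2 / 2 = -x ^ 2 / (2 * σ ^ 2) := by
      rw [mul_pow]
      field_simp
    rw [harg]
  simp_rw [h1]
  rw [integral_const_mul,
    integral_comp_mul_left_Ioi (fun y => Real.exp (-y ^ 2 / 2)) a (inv_pos.mpr hσ)]
  rw [gaussQ, smul_eq_mul, inv_inv]
  rw [show σ⁻¹ * a = a / σ by rw [div_eq_inv_mul]]
  field_simp

lemma integral_gpdf_Ico {σ : ℝ} (hσ : 0 < σ) {a b : ℝ} (hab : a ≤ b) :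
    ∫ x in Ico a b, gpdf σ x = gaussQ (a / σ) - gaussQ (b / σ) := by
  have hint : Integrable (gpdf σ) := integrable_gpdf hσ
  have hd : Disjoint (Ico a b) (Ici b) := by
    rw [Set.disjoint_left]
    rintro x ⟨_, h2⟩ h3
    exact absurd h3 (not_le.mpr h2)
  have hu := setIntegral_union (f := gpdf σ) (μ := volume) hd measurableSet_Ici
    hint.integrableOn hint.integrableOn
  rw [Ico_union_Ici_eq_Ici hab, integral_Ici_eq_integral_Ioi, integral_Ici_eq_integral_Ioi,
    integral_gpdf_Ioi hσ, integral_gpdf_Ioi hσ] at hu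
  linarith

lemma integral_mul_gpdf_Ico {σ : ℝ} (hσ : 0 < σ) {a b : ℝ} (hab : a ≤ b) :
    ∫ x in Ico a b, x * gpdf σ x
      = σ / Real.sqrt (2 * π) * (Real.exp (-a ^ 2 / (2 * σ ^ 2))
          - Real.exp (-b ^ 2 / (2 * σ ^ 2))) := by
  have hs : (0 : ℝ) < Real.sqrt (2 * π) := Real.sqrt_pos.mpr (by positivity)
  have hcont : Continuous fun x : ℝ => x * gpdf σ x := by
    unfold gpdf; fun_prop
  have hder : ∀ x : ℝ, HasDerivAt
      (fun y : ℝ => -(σ / Real.sqrt (2 * π)) * Real.exp (-y ^ 2 / (2 * σ ^ 2)))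
      (x * gpdf σ x) x := by
    intro x
    have h1 : HasDerivAt (fun y : ℝ => -y ^ 2 / (2 * σ ^ 2))
        (-(2 * x) / (2 * σ ^ 2)) x := by
      have := ((hasDerivAt_pow 2 x).neg).div_const (2 * σ ^ 2)
      simpa using this
    have h2 := (h1.exp).const_mul (-(σ / Real.sqrt (2 * π)))
    refine h2.congr_deriv ?_
    unfold gpdf
    field_simp
  rw [integral_Ico_eq_integral_Ioo, ← integral_Ioc_eq_integral_Ioo,
    ← intervalIntegral.integral_of_le hab,
    intervalIntegral.integral_eq_sub_of_hasDerivAt (fun x _ => hder x)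
      (hcont.intervalIntegrable a b)]
  ring

lemma integral_sq_mul_gpdf {σ : ℝ} (hσ : 0 < σ) : ∫ x : ℝ, x ^ 2 * gpdf σ x = σ ^ 2 := by
  have hs : (0 : ℝ) < Real.sqrt (2 * π) := Real.sqrt_pos.mpr (by positivity)
  set b : ℝ := (2 * σ ^ 2)⁻¹ with hbdef
  have hb : 0 < b := by positivity
  -- integrability of pieces
  have hint2 : Integrable (fun x : ℝ => x ^ 2 * Real.exp (-b * x ^ 2)) := by
    have h0 : Integrable (fun x : ℝ => x ^ (2 : ℝ) * Real.exp (-b * x ^ 2)) :=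
      integrable_rpow_mul_exp_neg_mul_sq hb (by norm_num)
    have hfe : (fun x : ℝ => x ^ (2 : ℝ) * Real.exp (-b * x ^ 2))
        = fun x : ℝ => x ^ 2 * Real.exp (-b * x ^ 2) := by
      funext x
      rw [show x ^ (2 : ℝ) = x ^ (2 : ℕ) by rw [← Real.rpow_natCast x 2]; norm_num]
    rwa [hfe] at h0
  have hint0 : Integrable (fun x : ℝ => Real.exp (-b * x ^ 2)) := integrable_exp_neg_mul_sq hb
  -- key computation on Ioi 0 by integration by parts
  have hF : ∀ x : ℝ, HasDerivAt (fun y : ℝ => (-(2 * b)⁻¹ * y) * Real.exp (-b * y ^ 2))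
      (x ^ 2 * Real.exp (-b * x ^ 2) - (2 * b)⁻¹ * Real.exp (-b * x ^ 2)) x := by
    intro x
    have h1 : HasDerivAt (fun y : ℝ => -(2 * b)⁻¹ * y) (-(2 * b)⁻¹) x := by
      simpa using (hasDerivAt_id x).const_mul (-(2 * b)⁻¹)
    have h2 : HasDerivAt (fun y : ℝ => Real.exp (-b * y ^ 2))
        (Real.exp (-b * x ^ 2) * (-b * (2 * x))) x := by
      have := ((hasDerivAt_pow 2 x).const_mul (-b)).exp
      simpa [mul_comm, mul_assoc, mul_left_comm] using this
    have := h1.mul h2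
    refine this.congr_deriv ?_
    have hbne : b ≠ 0 := hb.ne'
    field_simp
    ring
  have htend : Tendsto (fun y : ℝ => (-(2 * b)⁻¹ * y) * Real.exp (-b * y ^ 2)) atTop
      (𝓝 0) := by
    have ho := rpow_mul_exp_neg_mul_sq_isLittleO_exp_neg hb (1 : ℝ)
    have hlin : Tendsto (fun x : ℝ => -(1 / 2 : ℝ) * x) atTop atBot :=
      (tendsto_id (α := ℝ)).const_mul_atTop_of_neg (by norm_num)
    have hexp0 : Tendsto (fun x : ℝ => Real.exp (-(1 / 2 : ℝ) * x)) atTop (𝓝 0) :=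
      Real.tendsto_exp_atBot.comp hlin
    have h0 : Tendsto (fun x : ℝ => x ^ (1 : ℝ) * Real.exp (-b * x ^ 2)) atTop (𝓝 0) :=
      ho.tendsto_zero_of_tendsto hexp0
    have h1 : Tendsto (fun x : ℝ => x * Real.exp (-b * x ^ 2)) atTop (𝓝 0) := by
      refine h0.congr (fun x => ?_)
      rw [Real.rpow_one]
    have := h1.const_mul (-(2 * b)⁻¹)
    simpa [mul_assoc] using this
  have hint_sub : Integrable (fun x : ℝ => x ^ 2 * Real.exp (-b * x ^ 2)
      - (2 * b)⁻¹ * Real.exp (-b * x ^ 2)) := hint2.sub (hint0.const_mul _)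
  have hIoi := integral_Ioi_of_hasDerivAt_of_tendsto' (a := 0) (fun x _ => hF x)
    hint_sub.integrableOn htend
  simp only [mul_zero, zero_mul, neg_zero, zero_pow, Real.exp_zero, mul_one, sub_zero] at hIoi
  have hIoi' := hIoi
  rw [integral_sub hint2.integrableOn (hint0.const_mul _).integrableOn, sub_eq_zero,
    integral_const_mul, integral_gaussian_Ioi] at hIoi'
  -- total integral of x^2 exp(-b x^2)
  have htot : (∫ x : ℝ, x ^ 2 * Real.exp (-b * x ^ 2)) = (2 * b)⁻¹ * Real.sqrt (π / b) := by
    have habs := integral_comp_abs (f := fun t : ℝ => t ^ 2 * Real.exp (-b * t ^ 2))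
    simp only [sq_abs] at habs
    rw [habs, hIoi']
    ring
  -- now finish
  have hgf : (fun x : ℝ => x ^ 2 * gpdf σ x)
      = fun x => (σ * Real.sqrt (2 * π))⁻¹ * (x ^ 2 * Real.exp (-b * x ^ 2)) := by
    funext x
    rw [gpdf_eq']
    ring
  rw [hgf, integral_const_mul, htot]
  have hb1 : (2 * b)⁻¹ = σ ^ 2 := by
    rw [hbdef]; field_simp
  have hb2 : Real.sqrt (π / b) = Real.sqrt (2 * π) * σ := by
    rw [hbdef, show π / (2 * σ ^ 2)⁻¹ = (2 * π) * σ ^ 2 by field_simp,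
      Real.sqrt_mul (by positivity), Real.sqrt_sq hσ.le]
  rw [hb1, hb2]
  field_simp

lemma plt_floor_eq {β : ℝ} (hβ : 0 < β) (i : ℤ) (x : ℝ) :
    ⌊x / β + 1 / 2⌋ = i ↔ x ∈ Set.Ico (-(β / 2) + i * β) (β / 2 + i * β) := by
  rw [Int.floor_eq_iff, Set.mem_Ico]
  constructor
  · rintro ⟨h1, h2⟩
    have h1' : ((i : ℝ) - 1 / 2) * β ≤ x := by
      rw [← le_div_iff₀ hβ]; linarith
    have h2' : x < ((i : ℝ) + 1 / 2) * β := by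
      rw [← div_lt_iff₀ hβ]; push_cast at h2; linarith
    constructor
    · nlinarith
    · nlinarith
  · rintro ⟨h1, h2⟩
    constructor
    · have h1' : ((i : ℝ) - 1 / 2) * β ≤ x := by nlinarith
      rw [← le_div_iff₀ hβ] at h1'; linarith
    · have h2' : x < ((i : ℝ) + 1 / 2) * β := by nlinarith
      rw [← div_lt_iff₀ hβ] at h2'
      push_cast
      linarith

lemma neg_one_zpow_abs (i : ℤ) : |(-1 : ℝ) ^ i| = 1 := by
  rcases Int.even_or_odd i with h | h
  · rw [h.neg_one_zpow, abs_one]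
  · rw [h.neg_one_zpow, abs_neg, abs_one]

lemma neg_one_zpow_sq (i : ℤ) : ((-1 : ℝ) ^ i) ^ 2 = 1 := by
  rw [← sq_abs, neg_one_zpow_abs, one_pow]

theorem plt_average_power
    {Ω : Type*} [MeasurableSpace Ω] (P : Measure Ω) [IsProbabilityMeasure P]
    (σv α β : ℝ) (hσv : 0 < σv) (hβ : 0 < β)
    (V : Ω → ℝ) (hV : Measurable V)
    (hVlaw : P.map V = gaussianReal 0 ((σv ^ 2).toNNReal)) :
    Summable (fun i : ℤ =>
        |(i : ℝ) ^ 2 * (gaussQ ((-(β / 2) + i * β) / σv) - gaussQ ((β / 2 + i * β) / σv))|) ∧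
      Summable (fun i : ℤ =>
        |(i : ℝ) * (Real.exp (-(-(β / 2) + i * β) ^ 2 / (2 * σv ^ 2)) -
          Real.exp (-(β / 2 + i * β) ^ 2 / (2 * σv ^ 2)))|) ∧
      (∫ ω, fPLT α β (V ω) ^ 2 ∂P) =
        α ^ 2 * (σv ^ 2 +
          β ^ 2 * ∑' i : ℤ,
            (i : ℝ) ^ 2 * (gaussQ ((-(β / 2) + i * β) / σv) - gaussQ ((β / 2 + i * β) / σv)) -
          (2 * β * σv / Real.sqrt (2 * π)) * ∑' i : ℤ,
            (i : ℝ) * (Real.exp (-(-(β / 2) + i * β) ^ 2 / (2 * σv ^ 2)) -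
              Real.exp (-(β / 2 + i * β) ^ 2 / (2 * σv ^ 2)))) := by
  have hs : (0 : ℝ) < Real.sqrt (2 * π) := Real.sqrt_pos.mpr (by positivity)
  have hvne : (σv ^ 2).toNNReal ≠ 0 :=
    (Real.toNNReal_pos.mpr (show (0 : ℝ) < σv ^ 2 by positivity)).ne'
  -- measurability
  have hnmeas : Measurable fun x : ℝ => (⌊x / β + 1 / 2⌋ : ℤ) :=
    ((measurable_id.div_const β).add_const _).floor
  have hpowm : Measurable fun x : ℝ => ((-1 : ℝ) ^ (⌊x / β + 1 / 2⌋ : ℤ)) :=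
    (measurable_from_top (f := fun k : ℤ => ((-1 : ℝ) ^ k))).comp hnmeas
  have hcastm : Measurable fun x : ℝ => ((⌊x / β + 1 / 2⌋ : ℤ) : ℝ) :=
    (measurable_from_top (f := fun k : ℤ => ((k : ℝ)))).comp hnmeas
  have hfm : Measurable (fPLT α β) := by
    unfold fPLT
    exact (hpowm.const_mul α).mul ((hcastm.const_mul β).sub measurable_id)
  have hgm : Measurable (gpdf σv) := by unfold gpdf; fun_prop
  -- reduce to a Lebesgue integral against the density
  have hpdf_eq : ∀ x : ℝ, gaussianPDFReal 0 ((σv ^ 2).toNNReal) x = gpdf σv x := by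
    intro x
    unfold gaussianPDFReal gpdf
    rw [Real.coe_toNNReal _ (sq_nonneg σv), sub_zero,
      show 2 * π * σv ^ 2 = (2 * π) * σv ^ 2 by ring,
      Real.sqrt_mul (by positivity), Real.sqrt_sq hσv.le, mul_comm (Real.sqrt (2 * π)) σv]
  have hmap : (∫ ω, fPLT α β (V ω) ^ 2 ∂P) = ∫ x, fPLT α β x ^ 2 * gpdf σv x := by
    have h1 : (∫ ω, fPLT α β (V ω) ^ 2 ∂P) = ∫ x, fPLT α β x ^ 2 ∂(P.map V) :=
      (integral_map hV.aemeasurable ((hfm.pow_const 2).aestronglyMeasurable)).symm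
    rw [h1, hVlaw, gaussianReal_of_var_ne_zero _ hvne]
    have h2 : gaussianPDF 0 ((σv ^ 2).toNNReal)
        = fun x => ((Real.toNNReal (gaussianPDFReal 0 ((σv ^ 2).toNNReal) x) : ℝ≥0) : ℝ≥0∞) :=
      rfl
    rw [h2, integral_withDensity_eq_integral_smul
      ((measurable_gaussianPDFReal _ _).real_toNNReal) _]
    congr 1
    funext x
    rw [NNReal.smul_def, smul_eq_mul, Real.coe_toNNReal _ (gaussianPDFReal_nonneg _ _ _),
      hpdf_eq x, mul_comm]
  -- the partition
  set S : ℤ → Set ℝ := fun i => Ico (-(β / 2) + i * β) (β / 2 + i * β) with hSdef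
  have hmemS : ∀ (i : ℤ) (x : ℝ), x ∈ S i ↔ ⌊x / β + 1 / 2⌋ = i := fun i x =>
    (plt_floor_eq hβ i x).symm
  have hd : Pairwise (Function.onFun Disjoint S) := by
    intro i j hij
    rw [Function.onFun, Set.disjoint_left]
    intro x hxi hxj
    exact hij (((hmemS i x).mp hxi).symm.trans ((hmemS j x).mp hxj))
  have hU : (⋃ i, S i) = univ := by
    ext x
    simp only [mem_iUnion, mem_univ, iff_true]
    exact ⟨⌊x / β + 1 / 2⌋, (hmemS _ x).mpr rfl⟩
  have hEngine : ∀ f : ℝ → ℝ, Integrable f →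
      HasSum (fun i : ℤ => ∫ x in S i, f x) (∫ x, f x) := by
    intro f hf
    have h := hasSum_integral_iUnion (fun i : ℤ => measurableSet_Ico) hd hf.integrableOn
    rwa [hU, Measure.restrict_univ] at h
  -- integrability facts
  have h_int0 := integrable_gpdf hσv
  have h_int1 := integrable_mul_gpdf hσv
  have h_int2 := integrable_sq_mul_gpdf hσv
  have h_intabs := integrable_abs_mul_gpdf hσv
  have hG : Integrable (fun x => (|x| / β + 1 / 2) ^ 2 * gpdf σv x) := by
    have hGfun : (fun x : ℝ => (|x| / β + 1 / 2) ^ 2 * gpdf σv x)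
        = fun x => (β ^ 2)⁻¹ * (x ^ 2 * gpdf σv x) + β⁻¹ * (|x| * gpdf σv x)
          + (1 / 4) * gpdf σv x := by
      funext x
      have key : (|x| / β + 1 / 2) ^ 2 = x ^ 2 / β ^ 2 + |x| / β + 1 / 4 := by
        have h := sq_abs x
        field_simp [hβ.ne']
        linear_combination 16 * h
      rw [key]
      ring
    rw [hGfun]
    exact ((h_int2.const_mul _).add (h_intabs.const_mul _)).add (h_int0.const_mul _)
  -- boundedness of the main integrand
  have hbd : ∀ x : ℝ, |fPLT α β x| ≤ |α| * (β / 2) := by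
    intro x
    obtain ⟨hx1, hx2⟩ := (plt_floor_eq hβ ⌊x / β + 1 / 2⌋ x).mp rfl
    unfold fPLT
    rw [abs_mul, abs_mul, neg_one_zpow_abs, mul_one]
    have h : |β * (⌊x / β + 1 / 2⌋ : ℝ) - x| ≤ β / 2 := by
      rw [abs_le]
      constructor <;> [linarith; linarith]
    exact mul_le_mul_of_nonneg_left h (abs_nonneg α)
  have h_intf : Integrable fun x => fPLT α β x ^ 2 * gpdf σv x := by
    refine Integrable.mono' (h_int0.const_mul (α ^ 2 * β ^ 2 / 4))
      (((hfm.pow_const 2).mul hgm).aestronglyMeasurable)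
      (Filter.Eventually.of_forall fun x => ?_)
    rw [Real.norm_eq_abs, abs_mul, abs_of_nonneg (sq_nonneg _),
      abs_of_nonneg (gpdf_nonneg hσv x)]
    have h1 : |fPLT α β x| ^ 2 ≤ (|α| * (β / 2)) ^ 2 :=
      pow_le_pow_left₀ (abs_nonneg _) (hbd x) 2
    rw [sq_abs] at h1
    have h2 : (|α| * (β / 2)) ^ 2 = α ^ 2 * β ^ 2 / 4 := by
      rw [mul_pow, sq_abs]; ring
    exact mul_le_mul_of_nonneg_right (by linarith) (gpdf_nonneg hσv x)
  -- cell facts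
  have hab : ∀ i : ℤ, -(β / 2) + (i : ℝ) * β ≤ β / 2 + (i : ℝ) * β := fun i => by linarith
  have hPi : ∀ i : ℤ, (∫ x in S i, gpdf σv x)
      = gaussQ ((-(β / 2) + i * β) / σv) - gaussQ ((β / 2 + i * β) / σv) :=
    fun i => integral_gpdf_Ico hσv (hab i)
  have hMi : ∀ i : ℤ, (∫ x in S i, x * gpdf σv x) = σv / Real.sqrt (2 * π) *
      (Real.exp (-(-(β / 2) + i * β) ^ 2 / (2 * σv ^ 2))
        - Real.exp (-(β / 2 + i * β) ^ 2 / (2 * σv ^ 2))) :=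
    fun i => integral_mul_gpdf_Ico hσv (hab i)
  have hPnn : ∀ i : ℤ, 0 ≤ ∫ x in S i, gpdf σv x := fun i =>
    setIntegral_nonneg measurableSet_Ico fun x _ => gpdf_nonneg hσv x
  have hcell : ∀ (i : ℤ) (x : ℝ), x ∈ S i → |(i : ℝ)| ≤ |x| / β + 1 / 2 := by
    intro i x hx
    obtain ⟨hx1, hx2⟩ := hx
    have h1 : |x - (i : ℝ) * β| ≤ β / 2 := by
      rw [abs_le]; constructor <;> [linarith; linarith]
    have h3 : |(i : ℝ) * β| = |x - (x - (i : ℝ) * β)| := by congr 1; ring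
    have h4 : |x - (x - (i : ℝ) * β)| ≤ |x| + |x - (i : ℝ) * β| := abs_sub _ _
    rw [abs_mul, abs_of_pos hβ] at h3
    have h2 : |(i : ℝ)| * β ≤ |x| + β / 2 := by linarith
    rw [show |x| / β + 1 / 2 = (|x| + β / 2) / β by
        rw [eq_div_iff hβ.ne', add_mul, div_mul_cancel₀ _ hβ.ne']; ring,
      le_div_iff₀ hβ]
    exact h2
  -- comparison sums
  have hGsum : Summable fun i : ℤ => ∫ x in S i, (|x| / β + 1 / 2) ^ 2 * gpdf σv x :=
    (hEngine _ hG).summable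
  have hAle : ∀ i : ℤ, (i : ℝ) ^ 2 * (∫ x in S i, gpdf σv x)
      ≤ ∫ x in S i, (|x| / β + 1 / 2) ^ 2 * gpdf σv x := by
    intro i
    rw [← integral_const_mul]
    refine setIntegral_mono_on ((h_int0.const_mul _).integrableOn) hG.integrableOn
      measurableSet_Ico fun x hx => ?_
    have h3 := hcell i x hx
    have h4 : (i : ℝ) ^ 2 ≤ (|x| / β + 1 / 2) ^ 2 := by
      rw [← sq_abs (i : ℝ)]
      exact pow_le_pow_left₀ (abs_nonneg _) h3 2
    exact mul_le_mul_of_nonneg_right h4 (gpdf_nonneg hσv x)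
  have hBle : ∀ i : ℤ, |(i : ℝ) * ∫ x in S i, x * gpdf σv x|
      ≤ β * ∫ x in S i, (|x| / β + 1 / 2) ^ 2 * gpdf σv x := by
    intro i
    rw [← integral_const_mul]
    calc |∫ x in S i, (i : ℝ) * (x * gpdf σv x)|
        ≤ ∫ x in S i, |(i : ℝ) * (x * gpdf σv x)| := by
          simpa only [Real.norm_eq_abs] using norm_integral_le_integral_norm
            (μ := volume.restrict (S i)) (fun x => (i : ℝ) * (x * gpdf σv x))
      _ ≤ ∫ x in S i, β * ((|x| / β + 1 / 2) ^ 2 * gpdf σv x) := by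
          refine setIntegral_mono_on ((h_int1.const_mul _).abs.integrableOn)
            ((hG.const_mul β).integrableOn) measurableSet_Ico fun x hx => ?_
          have h3 := hcell i x hx
          have hg0 := gpdf_nonneg hσv x
          have ht0 : (0 : ℝ) ≤ |x| / β + 1 / 2 := by positivity
          have hxle : |x| ≤ β * (|x| / β + 1 / 2) := by
            rw [show β * (|x| / β + 1 / 2) = |x| + β / 2 by field_simp [hβ.ne']]
            linarith [hβ.le]
          rw [abs_mul, abs_mul, abs_of_nonneg hg0]
          calc |(i : ℝ)| * (|x| * gpdf σv x) = (|(i : ℝ)| * |x|) * gpdf σv x := by ring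
            _ ≤ ((|x| / β + 1 / 2) * (β * (|x| / β + 1 / 2))) * gpdf σv x :=
                mul_le_mul_of_nonneg_right (mul_le_mul h3 hxle (abs_nonneg x) ht0) hg0
            _ = β * ((|x| / β + 1 / 2) ^ 2 * gpdf σv x) := by ring
      _ = β * ∫ x in S i, (|x| / β + 1 / 2) ^ 2 * gpdf σv x := integral_const_mul _ _
  have hAsum : Summable fun i : ℤ => (i : ℝ) ^ 2 * ∫ x in S i, gpdf σv x := by
    refine Summable.of_norm_bounded hGsum fun i => ?_
    rw [Real.norm_eq_abs, abs_of_nonneg (mul_nonneg (sq_nonneg _) (hPnn i))]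
    exact hAle i
  have hBabs : Summable fun i : ℤ => |(i : ℝ) * ∫ x in S i, x * gpdf σv x| := by
    refine Summable.of_norm_bounded (hGsum.mul_left β) fun i => ?_
    rw [Real.norm_eq_abs, abs_abs]
    exact hBle i
  have hBsum : Summable fun i : ℤ => (i : ℝ) * ∫ x in S i, x * gpdf σv x :=
    hBabs.of_abs
  -- per-cell integral
  have hPer : ∀ i : ℤ, (∫ x in S i, fPLT α β x ^ 2 * gpdf σv x)
      = α ^ 2 * β ^ 2 * ((i : ℝ) ^ 2 * ∫ x in S i, gpdf σv x)
        - 2 * α ^ 2 * β * ((i : ℝ) * ∫ x in S i, x * gpdf σv x)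
        + α ^ 2 * ∫ x in S i, x ^ 2 * gpdf σv x := by
    intro i
    have hcg : ∀ x ∈ S i, fPLT α β x ^ 2 * gpdf σv x
        = α ^ 2 * β ^ 2 * (i : ℝ) ^ 2 * gpdf σv x
          - 2 * α ^ 2 * β * (i : ℝ) * (x * gpdf σv x)
          + α ^ 2 * (x ^ 2 * gpdf σv x) := by
      intro x hx
      have hfl : ⌊x / β + 1 / 2⌋ = i := (hmemS i x).mp hx
      unfold fPLT
      rw [hfl]
      have hsq := neg_one_zpow_sq i
      have hexpand : (α * (-1 : ℝ) ^ i * (β * (i : ℝ) - x)) ^ 2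
          = α ^ 2 * (((-1 : ℝ) ^ i) ^ 2) * (β * (i : ℝ) - x) ^ 2 := by ring
      rw [hexpand, hsq]
      ring
    rw [setIntegral_congr_fun measurableSet_Ico hcg]
    have hIO1 : IntegrableOn (fun x => α ^ 2 * β ^ 2 * (i : ℝ) ^ 2 * gpdf σv x) (S i) :=
      (h_int0.const_mul _).integrableOn
    have hIO2 : IntegrableOn (fun x => 2 * α ^ 2 * β * (i : ℝ) * (x * gpdf σv x)) (S i) :=
      (h_int1.const_mul _).integrableOn
    have hIO3 : IntegrableOn (fun x => α ^ 2 * (x ^ 2 * gpdf σv x)) (S i) :=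
      (h_int2.const_mul _).integrableOn
    have hIO12 : IntegrableOn (fun x => α ^ 2 * β ^ 2 * (i : ℝ) ^ 2 * gpdf σv x
        - 2 * α ^ 2 * β * (i : ℝ) * (x * gpdf σv x)) (S i) := hIO1.sub hIO2
    rw [integral_add hIO12 hIO3, integral_sub hIO1 hIO2,
      integral_const_mul, integral_const_mul, integral_const_mul]
    ring
  have hSsum : HasSum (fun i : ℤ => ∫ x in S i, x ^ 2 * gpdf σv x) (σv ^ 2) := by
    have h := hEngine _ h_int2
    rwa [integral_sq_mul_gpdf hσv] at h
  have hTot : HasSum (fun i : ℤ => ∫ x in S i, fPLT α β x ^ 2 * gpdf σv x)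
      (∫ x, fPLT α β x ^ 2 * gpdf σv x) := hEngine _ h_intf
  have hTot2 : HasSum (fun i : ℤ => α ^ 2 * β ^ 2 * ((i : ℝ) ^ 2 * ∫ x in S i, gpdf σv x)
      - 2 * α ^ 2 * β * ((i : ℝ) * ∫ x in S i, x * gpdf σv x)
      + α ^ 2 * ∫ x in S i, x ^ 2 * gpdf σv x)
      (∫ x, fPLT α β x ^ 2 * gpdf σv x) := by
    have hfe := funext hPer
    rwa [hfe] at hTot
  have hcombo := ((hAsum.hasSum.mul_left (α ^ 2 * β ^ 2)).sub
      (hBsum.hasSum.mul_left (2 * α ^ 2 * β))).add (hSsum.mul_left (α ^ 2))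
  have hE : (∫ x, fPLT α β x ^ 2 * gpdf σv x)
      = α ^ 2 * β ^ 2 * (∑' i : ℤ, (i : ℝ) ^ 2 * ∫ x in S i, gpdf σv x)
        - 2 * α ^ 2 * β * (∑' i : ℤ, (i : ℝ) * ∫ x in S i, x * gpdf σv x)
        + α ^ 2 * σv ^ 2 := hTot2.unique hcombo
  -- final assembly
  have hQf : ∀ i : ℤ, |(i : ℝ) ^ 2 * (gaussQ ((-(β / 2) + i * β) / σv)
      - gaussQ ((β / 2 + i * β) / σv))| = (i : ℝ) ^ 2 * ∫ x in S i, gpdf σv x := fun i => by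
    rw [← hPi i, abs_of_nonneg (mul_nonneg (sq_nonneg _) (hPnn i))]
  have hEf : ∀ i : ℤ, (Real.exp (-(-(β / 2) + i * β) ^ 2 / (2 * σv ^ 2))
      - Real.exp (-(β / 2 + i * β) ^ 2 / (2 * σv ^ 2)))
      = Real.sqrt (2 * π) / σv * ∫ x in S i, x * gpdf σv x := fun i => by
    rw [hMi i]
    field_simp
  refine ⟨?_, ?_, ?_⟩
  · exact hAsum.congr fun i => (hQf i).symm
  · have h := hBabs.mul_left (Real.sqrt (2 * π) / σv)
    refine h.congr fun i => ?_
    rw [← abs_of_pos (show (0 : ℝ) < Real.sqrt (2 * π) / σv by positivity), ← abs_mul]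
    congr 1
    rw [hEf i]
    ring
  · rw [hmap, hE]
    have hT1 : (∑' i : ℤ, (i : ℝ) ^ 2 * (gaussQ ((-(β / 2) + i * β) / σv)
        - gaussQ ((β / 2 + i * β) / σv)))
        = ∑' i : ℤ, (i : ℝ) ^ 2 * ∫ x in S i, gpdf σv x :=
      tsum_congr fun i => by rw [hPi i]
    have hT2 : (∑' i : ℤ, (i : ℝ) * (Real.exp (-(-(β / 2) + i * β) ^ 2 / (2 * σv ^ 2))
        - Real.exp (-(β / 2 + i * β) ^ 2 / (2 * σv ^ 2))))
        = Real.sqrt (2 * π) / σv * ∑' i : ℤ, (i : ℝ) * ∫ x in S i, x * gpdf σv x := by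
      rw [← tsum_mul_left]
      exact tsum_congr fun i => by rw [hEf i]; ring
    rw [hT1, hT2]
    field_simp
    ring

end
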